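/- Fix μ ∈ X with P({μ}) = 0, and let (P_n) be a sequence of Borel probability measures on X converging weakly to P as n → ∞. Then the metric spatial depths converge: D(μ; P_n) → D(μ; P) as n → ∞. -/

import Mathlib

open MeasureTheory Filter Metric Set
open scoped Classical

/-- The kernel `h` of the metric spatial depth. -/
noncomputable def mh {X : Type*} [MetricSpace X] (x₁ x₂ x₃ : X) : ℝ :=
  if x₃ = x₁ ∨ x₃ = x₂ then 0
  else (dist x₁ x₃ ^ 2 + dist x₂ x₃ ^ 2 - dist x₁ x₂ ^ 2) / (dist x₁ x₃ * dist x₂ x₃)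

/-- The metric spatial depth of `μ` with respect to the measure `P`. -/
noncomputable def msDepth {X : Type*} [MetricSpace X] [MeasurableSpace X]
    (μ : X) (P : Measure X) : ℝ :=
  1 - (1 / 2) * ∫ x₁, ∫ x₂, mh x₁ x₂ μ ∂P ∂P

section AuxMSD

variable {X : Type*} [MetricSpace X]

lemma abs_mh_le_two (x₁ x₂ x₃ : X) : |mh x₁ x₂ x₃| ≤ 2 := by
  unfold mh
  split
  · simp
  · next h =>
    push_neg at h
    have h1 : (0:ℝ) < dist x₁ x₃ := dist_pos.mpr (fun e => h.1 e.symm)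
    have h2 : (0:ℝ) < dist x₂ x₃ := dist_pos.mpr (fun e => h.2 e.symm)
    have t1 : dist x₁ x₂ ≤ dist x₁ x₃ + dist x₃ x₂ := dist_triangle _ _ _
    have t2 : dist x₁ x₃ ≤ dist x₁ x₂ + dist x₂ x₃ := dist_triangle _ _ _
    have t3 : dist x₂ x₃ ≤ dist x₂ x₁ + dist x₁ x₃ := dist_triangle _ _ _
    rw [dist_comm x₃ x₂] at t1
    rw [dist_comm x₂ x₁] at t3
    have hnn : (0:ℝ) ≤ dist x₁ x₂ := dist_nonneg
    rw [abs_le]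
    constructor
    · rw [le_div_iff₀ (by positivity)]
      nlinarith
    · rw [div_le_iff₀ (by positivity)]
      nlinarith

lemma measurable_mh [MeasurableSpace X] [BorelSpace X] [SecondCountableTopology X] (μ : X) :
    Measurable (fun p : X × X => mh p.1 p.2 μ) := by
  unfold mh
  apply Measurable.ite
  · have : {p : X × X | μ = p.1 ∨ μ = p.2} =
        (Prod.fst ⁻¹' {μ}) ∪ (Prod.snd ⁻¹' {μ}) := by
      ext p; simp [eq_comm]
    rw [this]
    exact ((measurable_fst (measurableSet_singleton μ)).union
      (measurable_snd (measurableSet_singleton μ)))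
  · exact measurable_const
  · apply Measurable.div
    · fun_prop
    · fun_prop

/-- cutoff function -/
noncomputable def phi (μ : X) (ε : ℝ) (x : X) : ℝ := min 1 (dist x μ / ε)

lemma phi_nonneg (μ : X) {ε : ℝ} (hε : 0 < ε) (x : X) : 0 ≤ phi μ ε x :=
  le_min one_pos.le (by positivity)

lemma phi_le_one (μ : X) (ε : ℝ) (x : X) : phi μ ε x ≤ 1 := min_le_left _ _

lemma continuous_phi (μ : X) (ε : ℝ) : Continuous (phi μ ε) :=
  continuous_const.min ((continuous_id.dist continuous_const).div_const ε)

lemma phi_self (μ : X) (ε : ℝ) : phi μ ε μ = 0 := by simp [phi]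

lemma continuous_gphi (μ : X) {ε : ℝ} (hε : 0 < ε) :
    Continuous (fun p : X × X => phi μ ε p.1 * phi μ ε p.2 * mh p.1 p.2 μ) := by
  rw [continuous_iff_continuousAt]
  intro p
  by_cases h1 : p.1 = μ
  · unfold ContinuousAt
    rw [show (fun p : X × X => phi μ ε p.1 * phi μ ε p.2 * mh p.1 p.2 μ) p = 0 from by
      simp [h1, phi_self]]
    apply squeeze_zero_norm (a := fun q : X × X => 2 * phi μ ε q.1)
    · intro q
      have := abs_mh_le_two q.1 q.2 μ
      have h0 := phi_nonneg μ hε q.1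
      have h0' := phi_nonneg μ hε q.2
      have habs := abs_nonneg (mh q.1 q.2 μ)
      calc ‖phi μ ε q.1 * phi μ ε q.2 * mh q.1 q.2 μ‖
          = phi μ ε q.1 * phi μ ε q.2 * |mh q.1 q.2 μ| := by
            rw [Real.norm_eq_abs, abs_mul, abs_mul, abs_of_nonneg h0, abs_of_nonneg h0']
        _ ≤ 2 * phi μ ε q.1 := by
            have hb : phi μ ε q.2 * |mh q.1 q.2 μ| ≤ 2 := by
              calc phi μ ε q.2 * |mh q.1 q.2 μ| ≤ 1 * 2 :=
                    mul_le_mul (phi_le_one μ ε q.2) this habs zero_le_one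
                _ = 2 := by ring
            calc phi μ ε q.1 * phi μ ε q.2 * |mh q.1 q.2 μ|
                = phi μ ε q.1 * (phi μ ε q.2 * |mh q.1 q.2 μ|) := by ring
              _ ≤ phi μ ε q.1 * 2 := mul_le_mul_of_nonneg_left hb h0
              _ = 2 * phi μ ε q.1 := by ring
    · have : Tendsto (fun q : X × X => 2 * phi μ ε q.1) (nhds p) (nhds (2 * phi μ ε p.1)) :=
        (tendsto_const_nhds.mul (((continuous_phi μ ε).comp continuous_fst).continuousAt))
      rw [h1, phi_self, mul_zero] at this
      exact this
  · by_cases h2 : p.2 = μ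
    · unfold ContinuousAt
      rw [show (fun p : X × X => phi μ ε p.1 * phi μ ε p.2 * mh p.1 p.2 μ) p = 0 from by
        simp [h2, phi_self]]
      apply squeeze_zero_norm (a := fun q : X × X => 2 * phi μ ε q.2)
      · intro q
        have := abs_mh_le_two q.1 q.2 μ
        have h0 := phi_nonneg μ hε q.1
        have h0' := phi_nonneg μ hε q.2
        calc ‖phi μ ε q.1 * phi μ ε q.2 * mh q.1 q.2 μ‖
            = phi μ ε q.1 * phi μ ε q.2 * |mh q.1 q.2 μ| := by
              rw [Real.norm_eq_abs, abs_mul, abs_mul, abs_of_nonneg h0, abs_of_nonneg h0']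
          _ ≤ 2 * phi μ ε q.2 := by
              have habs : (0:ℝ) ≤ |mh q.1 q.2 μ| := abs_nonneg _
              have hb : phi μ ε q.1 * |mh q.1 q.2 μ| ≤ 2 := by
                calc phi μ ε q.1 * |mh q.1 q.2 μ| ≤ 1 * 2 :=
                      mul_le_mul (phi_le_one μ ε q.1) this habs zero_le_one
                  _ = 2 := by ring
              calc phi μ ε q.1 * phi μ ε q.2 * |mh q.1 q.2 μ|
                  = phi μ ε q.2 * (phi μ ε q.1 * |mh q.1 q.2 μ|) := by ring
                _ ≤ phi μ ε q.2 * 2 := mul_le_mul_of_nonneg_left hb h0'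
                _ = 2 * phi μ ε q.2 := by ring
      · have : Tendsto (fun q : X × X => 2 * phi μ ε q.2) (nhds p) (nhds (2 * phi μ ε p.2)) :=
          (tendsto_const_nhds.mul (((continuous_phi μ ε).comp continuous_snd).continuousAt))
        rw [h2, phi_self, mul_zero] at this
        exact this
    · -- both coordinates differ from μ
      have hU : IsOpen {q : X × X | q.1 ≠ μ ∧ q.2 ≠ μ} := by
        apply IsOpen.inter
        · exact isOpen_compl_singleton.preimage continuous_fst
        · exact isOpen_compl_singleton.preimage continuous_snd
      have hpU : p ∈ {q : X × X | q.1 ≠ μ ∧ q.2 ≠ μ} := ⟨h1, h2⟩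
      have heq : (fun q : X × X => phi μ ε q.1 * phi μ ε q.2 * mh q.1 q.2 μ) =ᶠ[nhds p]
          (fun q : X × X => phi μ ε q.1 * phi μ ε q.2 *
            ((dist q.1 μ ^ 2 + dist q.2 μ ^ 2 - dist q.1 q.2 ^ 2) / (dist q.1 μ * dist q.2 μ))) := by
        filter_upwards [hU.mem_nhds hpU] with q hq
        unfold mh
        rw [if_neg]
        push_neg
        exact ⟨fun e => hq.1 e.symm, fun e => hq.2 e.symm⟩
      apply ContinuousAt.congr _ heq.symm
      apply ContinuousAt.mul
      · exact (((continuous_phi μ ε).comp continuous_fst).mul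
          ((continuous_phi μ ε).comp continuous_snd)).continuousAt
      · apply ContinuousAt.div
        · fun_prop
        · fun_prop
        · have d1 : (0:ℝ) < dist p.1 μ := dist_pos.mpr h1
          have d2 : (0:ℝ) < dist p.2 μ := dist_pos.mpr h2
          positivity

section ProdWeak

variable [MeasurableSpace X] [BorelSpace X] [SecondCountableTopology X]

lemma FU_tendsto (P : Measure X) [IsProbabilityMeasure P]
    (Pn : ℕ → Measure X) [∀ n, IsProbabilityMeasure (Pn n)]
    (hconv : ∀ U : Set X, IsOpen U → P (frontier U) = 0 →
      Tendsto (fun n => Pn n U) atTop (nhds (P U))) :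
    ∀ (m : ℕ) (U V : ℕ → Set X), (∀ i, IsOpen (U i)) → (∀ i, IsOpen (V i)) →
    (∀ i, P (frontier (U i)) = 0) → (∀ i, P (frontier (V i)) = 0) →
    Tendsto (fun n => (Pn n).prod (Pn n) (⋃ i ∈ Finset.range m, U i ×ˢ V i)) atTop
      (nhds (P.prod P (⋃ i ∈ Finset.range m, U i ×ˢ V i))) := by
  intro m
  induction m with
  | zero => intro U V _ _ _ _; simp
  | succ m IH =>
    intro U V hU hV hU0 hV0
    set Sm := ⋃ i ∈ Finset.range m, U i ×ˢ V i with hSm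
    set Tm := ⋃ i ∈ Finset.range m, (U i ∩ U m) ×ˢ (V i ∩ V m) with hTm
    have hSmeas : MeasurableSet Sm := by
      apply MeasurableSet.biUnion (Finset.range m).countable_toSet
      intro i _
      exact ((hU i).measurableSet).prod ((hV i).measurableSet)
    have hRmeas : MeasurableSet (U m ×ˢ V m) :=
      ((hU m).measurableSet).prod ((hV m).measurableSet)
    have hsplit : (⋃ i ∈ Finset.range (m+1), U i ×ˢ V i) = Sm ∪ (U m ×ˢ V m) := by
      rw [Finset.range_add_one, Finset.set_biUnion_insert]
      exact Set.union_comm _ _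
    have hinter : Sm ∩ (U m ×ˢ V m) = Tm := by
      ext p
      simp only [hSm, hTm, Set.mem_inter_iff, Set.mem_iUnion, Set.mem_prod]
      constructor
      · rintro ⟨⟨i, hi, h1, h2⟩, hR1, hR2⟩
        exact ⟨i, hi, ⟨h1, hR1⟩, ⟨h2, hR2⟩⟩
      · rintro ⟨i, hi, ⟨a, b⟩, c, d⟩
        exact ⟨⟨i, hi, a, c⟩, b, d⟩
    have key : ∀ (Q : Measure X), IsProbabilityMeasure Q →
        Q.prod Q (⋃ i ∈ Finset.range (m+1), U i ×ˢ V i)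
          = Q.prod Q Sm + Q (U m) * Q (V m) - Q.prod Q Tm := by
      intro Q hQ
      have h := measure_union_add_inter (μ := Q.prod Q) Sm hRmeas
      rw [hinter] at h
      rw [hsplit]
      have := ENNReal.eq_sub_of_add_eq (measure_ne_top (Q.prod Q) Tm) h
      rw [this, Measure.prod_prod]
    have t1 := IH U V hU hV hU0 hV0
    have t2 := hconv (U m) (hU m) (hU0 m)
    have t3 := hconv (V m) (hV m) (hV0 m)
    have t4 := IH (fun i => U i ∩ U m) (fun i => V i ∩ V m)
      (fun i => (hU i).inter (hU m)) (fun i => (hV i).inter (hV m))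
      (fun i => measure_mono_null
        ((frontier_inter_subset _ _).trans
          (Set.union_subset_union Set.inter_subset_left Set.inter_subset_right))
        (measure_union_null (hU0 i) (hU0 m)))
      (fun i => measure_mono_null
        ((frontier_inter_subset _ _).trans
          (Set.union_subset_union Set.inter_subset_left Set.inter_subset_right))
        (measure_union_null (hV0 i) (hV0 m)))
    have tcomb : Tendsto (fun n => (Pn n).prod (Pn n) Sm + Pn n (U m) * Pn n (V m)
        - (Pn n).prod (Pn n) Tm) atTop
        (nhds (P.prod P Sm + P (U m) * P (V m) - P.prod P Tm)) := by
      apply ENNReal.Tendsto.sub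
      · exact t1.add (ENNReal.Tendsto.mul t2 (Or.inr (measure_ne_top P _)) t3
          (Or.inr (measure_ne_top P _)))
      · exact t4
      · exact Or.inr (measure_ne_top _ _)
    rw [key P inferInstance]
    exact Tendsto.congr (fun n => (key (Pn n) inferInstance).symm) tcomb

lemma open_le_liminf (P : Measure X) [IsProbabilityMeasure P]
    (Pn : ℕ → Measure X) [∀ n, IsProbabilityMeasure (Pn n)]
    (hconv : ∀ U : Set X, IsOpen U → P (frontier U) = 0 →
      Tendsto (fun n => Pn n U) atTop (nhds (P U)))
    (G : Set (X × X)) (hG : IsOpen G) :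
    P.prod P G ≤ atTop.liminf (fun n => (Pn n).prod (Pn n) G) := by
  rcases Set.eq_empty_or_nonempty G with rfl | hGne
  · simp
  -- for every point of G, a good rectangle neighborhood
  have hrect : ∀ p : ↥G, ∃ U V : Set X, IsOpen U ∧ IsOpen V ∧
      P (frontier U) = 0 ∧ P (frontier V) = 0 ∧ (p : X × X) ∈ U ×ˢ V ∧ U ×ˢ V ⊆ G := by
    rintro ⟨p, hp⟩
    obtain ⟨δ, hδ, hball⟩ := Metric.isOpen_iff.mp hG p hp
    obtain ⟨r₁, hr₁, hfr₁⟩ := exists_null_frontier_thickening P ({p.1} : Set X) hδ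
    obtain ⟨r₂, hr₂, hfr₂⟩ := exists_null_frontier_thickening P ({p.2} : Set X) hδ
    rw [Metric.thickening_singleton] at hfr₁ hfr₂
    refine ⟨ball p.1 r₁, ball p.2 r₂, isOpen_ball, isOpen_ball, hfr₁, hfr₂, ?_, ?_⟩
    · exact ⟨mem_ball_self hr₁.1, mem_ball_self hr₂.1⟩
    · intro q hq
      apply hball
      rw [← ball_prod_same]
      exact ⟨ball_subset_ball hr₁.2.le hq.1, ball_subset_ball hr₂.2.le hq.2⟩
  choose U V hUo hVo hU0 hV0 hmem hsub using hrect
  have hsopen : ∀ p : ↥G, IsOpen (U p ×ˢ V p) := fun p => (hUo p).prod (hVo p)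
  obtain ⟨T, Tcount, hT⟩ := TopologicalSpace.isOpen_iUnion_countable
    (fun p : ↥G => U p ×ˢ V p) hsopen
  have hcover : ⋃ p : ↥G, U p ×ˢ V p = G := by
    apply Set.Subset.antisymm
    · exact Set.iUnion_subset fun p => hsub p
    · intro q hq
      exact Set.mem_iUnion.mpr ⟨⟨q, hq⟩, hmem ⟨q, hq⟩⟩
  have hTne : T.Nonempty := by
    rcases Set.eq_empty_or_nonempty T with rfl | h
    · exfalso
      obtain ⟨q, hq⟩ := hGne
      rw [← hcover, ← hT] at hq
      simpa using hq
    · exact h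
  obtain ⟨e, he⟩ := Set.Countable.exists_eq_range Tcount hTne
  have hcover' : ⋃ n : ℕ, U (e n) ×ˢ V (e n) = G := by
    rw [← hcover, ← hT, he]
    ext q
    simp only [Set.mem_iUnion, Set.mem_range]
    constructor
    · rintro ⟨n, hn⟩; exact ⟨e n, ⟨n, rfl⟩, hn⟩
    · rintro ⟨p, ⟨n, rfl⟩, hn⟩; exact ⟨n, hn⟩
  set A : ℕ → Set (X × X) := fun k => ⋃ i ∈ Finset.range k, U (e i) ×ˢ V (e i) with hA
  have hAmono : Monotone A := by
    intro k l hkl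
    apply Set.biUnion_subset_biUnion_left
    intro i hi
    have : i < k := Finset.mem_range.mp hi
    exact Finset.mem_range.mpr (lt_of_lt_of_le this hkl)
  have hAG : ⋃ k, A k = G := by
    rw [← hcover']
    apply Set.Subset.antisymm
    · exact Set.iUnion_subset fun k =>
        Set.iUnion₂_subset fun i _ => Set.subset_iUnion (fun n => U (e n) ×ˢ V (e n)) i
    · intro q hq
      obtain ⟨n, hn⟩ := Set.mem_iUnion.mp hq
      refine Set.mem_iUnion.mpr ⟨n + 1, ?_⟩
      exact Set.mem_biUnion (Finset.self_mem_range_succ n) hn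
  have hAk : ∀ k, Tendsto (fun n => (Pn n).prod (Pn n) (A k)) atTop (nhds (P.prod P (A k))) :=
    fun k => FU_tendsto P Pn hconv k (fun i => U (e i)) (fun i => V (e i))
      (fun i => hUo _) (fun i => hVo _) (fun i => hU0 _) (fun i => hV0 _)
  have hle : ∀ k, P.prod P (A k) ≤ atTop.liminf (fun n => (Pn n).prod (Pn n) G) := by
    intro k
    rw [← (hAk k).liminf_eq]
    exact Filter.liminf_le_liminf (Filter.Eventually.of_forall fun n =>
      measure_mono (hAG ▸ Set.subset_iUnion A k))
  have hlim : Tendsto (fun k => P.prod P (A k)) atTop (nhds (P.prod P G)) := by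
    have := tendsto_measure_iUnion_atTop (μ := P.prod P) hAmono
    rwa [hAG] at this
  exact le_of_tendsto hlim (Filter.Eventually.of_forall hle)

lemma prod_weak (P : Measure X) [IsProbabilityMeasure P]
    (Pn : ℕ → Measure X) [∀ n, IsProbabilityMeasure (Pn n)]
    (hweak : ∀ f : BoundedContinuousFunction X ℝ,
      Tendsto (fun n => ∫ x, f x ∂(Pn n)) atTop (nhds (∫ x, f x ∂P)))
    (g : BoundedContinuousFunction (X × X) ℝ) :
    Tendsto (fun n => ∫ p, g p ∂((Pn n).prod (Pn n))) atTop
      (nhds (∫ p, g p ∂(P.prod P))) := by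
  set PP : ProbabilityMeasure X := ⟨P, inferInstance⟩ with hPP
  set PPn : ℕ → ProbabilityMeasure X := fun n => ⟨Pn n, inferInstance⟩ with hPPn
  have hT : Tendsto PPn atTop (nhds PP) :=
    ProbabilityMeasure.tendsto_iff_forall_integral_tendsto.mpr hweak
  have hconv : ∀ U : Set X, IsOpen U → P (frontier U) = 0 →
      Tendsto (fun n => Pn n U) atTop (nhds (P U)) := fun U _ hU0 =>
    ProbabilityMeasure.tendsto_measure_of_null_frontier_of_tendsto' hT hU0
  set PP2 : ProbabilityMeasure (X × X) := ⟨P.prod P, inferInstance⟩ with hPP2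
  set PPn2 : ℕ → ProbabilityMeasure (X × X) := fun n => ⟨(Pn n).prod (Pn n), inferInstance⟩
    with hPPn2
  have hT2 : Tendsto PPn2 atTop (nhds PP2) := by
    apply tendsto_of_forall_isOpen_le_liminf
    intro G hGopen
    have hEN : P.prod P G ≤ atTop.liminf (fun n => (Pn n).prod (Pn n) G) :=
      open_le_liminf P Pn hconv G hGopen
    have aux : ENNReal.ofNNReal (Filter.liminf (fun i => PPn2 i G) atTop) =
        Filter.liminf (ENNReal.ofNNReal ∘ fun i => PPn2 i G) atTop := by
      refine Monotone.map_liminf_of_continuousAt (F := atTop) ENNReal.coe_mono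
        (fun i => PPn2 i G) ?_ ?_ ?_
      · exact ENNReal.continuous_coe.continuousAt
      · exact Filter.IsBoundedUnder.isCoboundedUnder_ge ⟨1, by simp⟩
      · exact ⟨0, by simp⟩
    rw [← ENNReal.coe_le_coe, aux]
    have e1 : (ENNReal.ofNNReal ∘ fun i => PPn2 i G) = fun n => (Pn n).prod (Pn n) G := by
      funext i
      exact ProbabilityMeasure.ennreal_coeFn_eq_coeFn_toMeasure (PPn2 i) G
    have e2 : ENNReal.ofNNReal (PP2 G) = P.prod P G :=
      ProbabilityMeasure.ennreal_coeFn_eq_coeFn_toMeasure PP2 G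
    rw [e1, e2]
    exact hEN
  exact ProbabilityMeasure.tendsto_iff_forall_integral_tendsto.mp hT2 g

end ProdWeak

section IntegralPart

variable [MeasurableSpace X] [BorelSpace X] [SecondCountableTopology X]

lemma integrable_of_bdd {α : Type*} [MeasurableSpace α] (Q : Measure α) [IsFiniteMeasure Q]
    {f : α → ℝ} (hm : AEStronglyMeasurable f Q) (C : ℝ) (h : ∀ x, |f x| ≤ C) :
    Integrable f Q :=
  ⟨hm, HasFiniteIntegral.of_bounded (C := C)
    (Filter.Eventually.of_forall fun x => by simpa [Real.norm_eq_abs] using h x)⟩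

lemma integrable_mh_prod (μ : X) (Q : Measure X) [IsProbabilityMeasure Q] :
    Integrable (fun p : X × X => mh p.1 p.2 μ) (Q.prod Q) :=
  integrable_of_bdd _ (measurable_mh μ).aestronglyMeasurable 2 (fun p => abs_mh_le_two _ _ _)

lemma integrable_gphi_prod (μ : X) {ε : ℝ} (hε : 0 < ε) (Q : Measure X)
    [IsProbabilityMeasure Q] :
    Integrable (fun p : X × X => phi μ ε p.1 * phi μ ε p.2 * mh p.1 p.2 μ) (Q.prod Q) := by
  apply integrable_of_bdd _ (continuous_gphi μ hε).measurable.aestronglyMeasurable 2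
  intro p
  have h0 := phi_nonneg μ hε p.1
  have h0' := phi_nonneg μ hε p.2
  have h1 := phi_le_one μ ε p.1
  have h1' := phi_le_one μ ε p.2
  have h2 := abs_mh_le_two p.1 p.2 μ
  have habs := abs_nonneg (mh p.1 p.2 μ)
  rw [abs_mul, abs_mul, abs_of_nonneg h0, abs_of_nonneg h0']
  nlinarith [mul_le_mul h1 h1' h0' zero_le_one,
    mul_le_mul_of_nonneg_left h2 (mul_nonneg h0 h0')]

lemma integrable_one_sub_phi_fst (μ : X) {ε : ℝ} (hε : 0 < ε) (Q : Measure X)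
    [IsProbabilityMeasure Q] :
    Integrable (fun p : X × X => 1 - phi μ ε p.1) (Q.prod Q) := by
  have hc : Continuous (fun p : X × X => 1 - phi μ ε p.1) :=
    continuous_const.sub ((continuous_phi μ ε).comp continuous_fst)
  apply integrable_of_bdd _ hc.measurable.aestronglyMeasurable 1
  intro p
  rw [abs_of_nonneg (by linarith [phi_le_one μ ε p.1])]
  linarith [phi_nonneg μ hε p.1]

lemma integrable_one_sub_phi_snd (μ : X) {ε : ℝ} (hε : 0 < ε) (Q : Measure X)
    [IsProbabilityMeasure Q] :
    Integrable (fun p : X × X => 1 - phi μ ε p.2) (Q.prod Q) := by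
  have hc : Continuous (fun p : X × X => 1 - phi μ ε p.2) :=
    continuous_const.sub ((continuous_phi μ ε).comp continuous_snd)
  apply integrable_of_bdd _ hc.measurable.aestronglyMeasurable 1
  intro p
  rw [abs_of_nonneg (by linarith [phi_le_one μ ε p.2])]
  linarith [phi_nonneg μ hε p.2]

lemma marginal_fst (μ : X) {ε : ℝ} (hε : 0 < ε) (Q : Measure X) [IsProbabilityMeasure Q] :
    ∫ p, (1 - phi μ ε p.1) ∂(Q.prod Q) = ∫ x, (1 - phi μ ε x) ∂Q := by
  rw [MeasureTheory.integral_prod _ (integrable_one_sub_phi_fst μ hε Q)]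
  simp [measure_univ]

lemma marginal_snd (μ : X) {ε : ℝ} (hε : 0 < ε) (Q : Measure X) [IsProbabilityMeasure Q] :
    ∫ p, (1 - phi μ ε p.2) ∂(Q.prod Q) = ∫ x, (1 - phi μ ε x) ∂Q := by
  rw [MeasureTheory.integral_prod _ (integrable_one_sub_phi_snd μ hε Q)]
  simp [measure_univ]

lemma err_bound (μ : X) {ε : ℝ} (hε : 0 < ε) (Q : Measure X) [IsProbabilityMeasure Q] :
    |∫ p, mh p.1 p.2 μ ∂(Q.prod Q)
      - ∫ p, phi μ ε p.1 * phi μ ε p.2 * mh p.1 p.2 μ ∂(Q.prod Q)|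
      ≤ 4 * ∫ x, (1 - phi μ ε x) ∂Q := by
  have hint1 := integrable_mh_prod μ Q
  have hint2 := integrable_gphi_prod μ hε Q
  rw [← integral_sub hint1 hint2]
  have hptw : ∀ p : X × X, |mh p.1 p.2 μ - phi μ ε p.1 * phi μ ε p.2 * mh p.1 p.2 μ|
      ≤ 2 * (1 - phi μ ε p.1) + 2 * (1 - phi μ ε p.2) := by
    intro p
    have h0 := phi_nonneg μ hε p.1
    have h0' := phi_nonneg μ hε p.2
    have h1 := phi_le_one μ ε p.1
    have h1' := phi_le_one μ ε p.2
    have h2 := abs_mh_le_two p.1 p.2 μ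
    have habs := abs_nonneg (mh p.1 p.2 μ)
    have hfac : |mh p.1 p.2 μ - phi μ ε p.1 * phi μ ε p.2 * mh p.1 p.2 μ|
        = (1 - phi μ ε p.1 * phi μ ε p.2) * |mh p.1 p.2 μ| := by
      rw [← abs_of_nonneg (a := 1 - phi μ ε p.1 * phi μ ε p.2) (by nlinarith), ← abs_mul]
      ring_nf
    rw [hfac]
    nlinarith [mul_le_mul_of_nonneg_left h2
        (show (0:ℝ) ≤ 1 - phi μ ε p.1 * phi μ ε p.2 by nlinarith),
      mul_nonneg (show (0:ℝ) ≤ 1 - phi μ ε p.1 by linarith)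
        (show (0:ℝ) ≤ 1 - phi μ ε p.2 by linarith)]
  calc |∫ p, (mh p.1 p.2 μ - phi μ ε p.1 * phi μ ε p.2 * mh p.1 p.2 μ) ∂(Q.prod Q)|
      ≤ ∫ p, |mh p.1 p.2 μ - phi μ ε p.1 * phi μ ε p.2 * mh p.1 p.2 μ| ∂(Q.prod Q) :=
        by
          have := norm_integral_le_integral_norm (μ := Q.prod Q)
            (f := fun p : X × X => mh p.1 p.2 μ - phi μ ε p.1 * phi μ ε p.2 * mh p.1 p.2 μ)
          simpa [Real.norm_eq_abs] using this
    _ ≤ ∫ p, (2 * (1 - phi μ ε p.1) + 2 * (1 - phi μ ε p.2)) ∂(Q.prod Q) := by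
        apply integral_mono (hint1.sub hint2).abs
        · exact (((integrable_one_sub_phi_fst μ hε Q).const_mul 2).add
            ((integrable_one_sub_phi_snd μ hε Q).const_mul 2))
        · exact hptw
    _ = 2 * ∫ p, (1 - phi μ ε p.1) ∂(Q.prod Q) + 2 * ∫ p, (1 - phi μ ε p.2) ∂(Q.prod Q) := by
        rw [integral_add (((integrable_one_sub_phi_fst μ hε Q).const_mul 2))
          (((integrable_one_sub_phi_snd μ hε Q).const_mul 2)),
          integral_const_mul, integral_const_mul]
    _ = 4 * ∫ x, (1 - phi μ ε x) ∂Q := by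
        rw [marginal_fst μ hε Q, marginal_snd μ hε Q]; ring

end IntegralPart

section Final

variable [MeasurableSpace X] [BorelSpace X] [SecondCountableTopology X]

noncomputable def gphiBCF (μ : X) {ε : ℝ} (hε : 0 < ε) : BoundedContinuousFunction (X × X) ℝ :=
  BoundedContinuousFunction.ofNormedAddCommGroup
    (fun p : X × X => phi μ ε p.1 * phi μ ε p.2 * mh p.1 p.2 μ) (continuous_gphi μ hε) 2
    (by
      intro p
      have h0 := phi_nonneg μ hε p.1
      have h0' := phi_nonneg μ hε p.2
      have h1 := phi_le_one μ ε p.1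
      have h1' := phi_le_one μ ε p.2
      have h2 := abs_mh_le_two p.1 p.2 μ
      have habs := abs_nonneg (mh p.1 p.2 μ)
      rw [Real.norm_eq_abs, abs_mul, abs_mul, abs_of_nonneg h0, abs_of_nonneg h0']
      nlinarith [mul_le_mul h1 h1' h0' zero_le_one,
        mul_le_mul_of_nonneg_left h2 (mul_nonneg h0 h0')])

noncomputable def psiBCF (μ : X) {ε : ℝ} (hε : 0 < ε) : BoundedContinuousFunction X ℝ :=
  BoundedContinuousFunction.ofNormedAddCommGroup
    (fun x : X => 1 - phi μ ε x) (continuous_const.sub (continuous_phi μ ε)) 1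
    (by
      intro x
      show ‖1 - phi μ ε x‖ ≤ 1
      rw [Real.norm_eq_abs, abs_of_nonneg (by linarith [phi_le_one μ ε x])]
      linarith [phi_nonneg μ hε x])

lemma smallphi (μ : X) (P : Measure X) [IsProbabilityMeasure P] (hμ : P {μ} = 0) :
    Tendsto (fun k : ℕ => ∫ x, (1 - phi μ ((1:ℝ)/(k+1)) x) ∂P) atTop (nhds 0) := by
  have h := MeasureTheory.tendsto_integral_of_dominated_convergence
    (F := fun k : ℕ => fun x : X => 1 - phi μ ((1:ℝ)/(k+1)) x)
    (f := fun _ : X => (0:ℝ)) (bound := fun _ : X => (1:ℝ)) (μ := P)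
    (fun k => (continuous_const.sub (continuous_phi μ _)).measurable.aestronglyMeasurable)
    (integrable_const 1)
    (fun k => Filter.Eventually.of_forall (fun x => by
      have hε : (0:ℝ) < (1:ℝ)/(k+1) := by positivity
      rw [Real.norm_eq_abs, abs_of_nonneg (by linarith [phi_le_one μ ((1:ℝ)/(k+1)) x])]
      linarith [phi_nonneg μ hε x]))
    ?_
  · simpa using h
  · have hae : ∀ᵐ x ∂P, x ≠ μ := by
      rw [MeasureTheory.ae_iff]
      convert hμ using 2
      ext x
      simp
    filter_upwards [hae] with x hx
    have hd : 0 < dist x μ := dist_pos.mpr hx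
    apply tendsto_nhds_of_eventually_eq
    obtain ⟨K, hK⟩ := exists_nat_one_div_lt hd
    rw [Filter.eventually_atTop]
    refine ⟨K, fun k hk => ?_⟩
    have hle : (1:ℝ)/(k+1) ≤ (1:ℝ)/(K+1) := by
      apply one_div_le_one_div_of_le (by positivity)
      exact_mod_cast by omega
    have hεk : (0:ℝ) < (1:ℝ)/(k+1) := by positivity
    have : phi μ ((1:ℝ)/(k+1)) x = 1 := by
      unfold phi
      apply min_eq_left
      rw [le_div_iff₀ hεk, one_mul]
      calc (1:ℝ)/(k+1) ≤ (1:ℝ)/(K+1) := hle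
        _ ≤ dist x μ := hK.le
    rw [this]
    ring

end Final


end AuxMSD

theorem msDepth_continuous_in_P {X : Type*} [MetricSpace X] [CompleteSpace X]
    [SecondCountableTopology X] [MeasurableSpace X] [BorelSpace X]
    (μ : X) (P : Measure X) [IsProbabilityMeasure P] (hμ : P {μ} = 0)
    (Pn : ℕ → Measure X) [∀ n, IsProbabilityMeasure (Pn n)]
    (hweak : ∀ f : BoundedContinuousFunction X ℝ,
      Filter.Tendsto (fun n => ∫ x, f x ∂(Pn n)) Filter.atTop (nhds (∫ x, f x ∂P))) :
    Filter.Tendsto (fun n => msDepth μ (Pn n)) Filter.atTop (nhds (msDepth μ P)) := by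
  have hiter : ∀ (Q : Measure X), IsProbabilityMeasure Q →
      ∫ x₁, ∫ x₂, mh x₁ x₂ μ ∂Q ∂Q = ∫ p, mh p.1 p.2 μ ∂(Q.prod Q) := by
    intro Q hQ
    exact MeasureTheory.integral_integral (integrable_mh_prod μ Q)
  have hA : Tendsto (fun n => ∫ p, mh p.1 p.2 μ ∂((Pn n).prod (Pn n))) atTop
      (nhds (∫ p, mh p.1 p.2 μ ∂(P.prod P))) := by
    rw [Metric.tendsto_atTop]
    intro δ hδ
    -- choose a small cutoff parameter
    have hsm := smallphi μ P hμ
    have hev : ∀ᶠ k : ℕ in atTop, ∫ x, (1 - phi μ ((1:ℝ)/(k+1)) x) ∂P < δ/16 :=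
      hsm.eventually_lt_const (by linarith)
    obtain ⟨k, hk⟩ := hev.exists
    set εv : ℝ := (1:ℝ)/(k+1) with hεv
    have hεpos : 0 < εv := by positivity
    -- weak convergence of the regularized double integrals
    have hB := prod_weak P Pn hweak (gphiBCF μ hεpos)
    simp only [gphiBCF, BoundedContinuousFunction.coe_ofNormedAddCommGroup] at hB
    -- weak convergence of the cutoff masses
    have hphi := hweak (psiBCF μ hεpos)
    simp only [psiBCF, BoundedContinuousFunction.coe_ofNormedAddCommGroup] at hphi
    have hphi' : ∀ᶠ n in atTop, ∫ x, (1 - phi μ εv x) ∂(Pn n) < δ/16 :=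
      hphi.eventually_lt_const hk
    have hB' : ∀ᶠ n in atTop,
        |(∫ p, phi μ εv p.1 * phi μ εv p.2 * mh p.1 p.2 μ ∂((Pn n).prod (Pn n)))
          - ∫ p, phi μ εv p.1 * phi μ εv p.2 * mh p.1 p.2 μ ∂(P.prod P)| < δ/4 := by
      have := Metric.tendsto_atTop.mp hB (δ/4) (by linarith)
      obtain ⟨N, hN⟩ := this
      rw [Filter.eventually_atTop]
      exact ⟨N, fun n hn => by rw [← Real.dist_eq]; exact hN n hn⟩
    have hcomb := (hphi'.and hB').exists_forall_of_atTop
    obtain ⟨N, hN⟩ := hcomb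
    refine ⟨N, fun n hn => ?_⟩
    obtain ⟨h1, h2⟩ := hN n hn
    rw [Real.dist_eq]
    have e1 := err_bound μ hεpos (Pn n)
    have e2 := err_bound μ hεpos P
    have hk' : ∫ x, (1 - phi μ εv x) ∂P < δ/16 := hk
    calc |(∫ p, mh p.1 p.2 μ ∂((Pn n).prod (Pn n))) - ∫ p, mh p.1 p.2 μ ∂(P.prod P)|
        ≤ |(∫ p, mh p.1 p.2 μ ∂((Pn n).prod (Pn n)))
            - ∫ p, phi μ εv p.1 * phi μ εv p.2 * mh p.1 p.2 μ ∂((Pn n).prod (Pn n))|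
          + |(∫ p, phi μ εv p.1 * phi μ εv p.2 * mh p.1 p.2 μ ∂((Pn n).prod (Pn n)))
            - ∫ p, phi μ εv p.1 * phi μ εv p.2 * mh p.1 p.2 μ ∂(P.prod P)|
          + |(∫ p, phi μ εv p.1 * phi μ εv p.2 * mh p.1 p.2 μ ∂(P.prod P))
            - ∫ p, mh p.1 p.2 μ ∂(P.prod P)| := by
            apply (abs_sub_le _ _ _).trans
            apply add_le_add_left
            exact abs_sub_le _ _ _
      _ < δ := by
          rw [abs_sub_comm (∫ p, phi μ εv p.1 * phi μ εv p.2 * mh p.1 p.2 μ ∂(P.prod P))]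
          have : |(∫ p, mh p.1 p.2 μ ∂((Pn n).prod (Pn n)))
            - ∫ p, phi μ εv p.1 * phi μ εv p.2 * mh p.1 p.2 μ ∂((Pn n).prod (Pn n))|
              ≤ 4 * ∫ x, (1 - phi μ εv x) ∂(Pn n) := e1
          linarith
  have hmain : Tendsto (fun n => ∫ x₁, ∫ x₂, mh x₁ x₂ μ ∂(Pn n) ∂(Pn n)) atTop
      (nhds (∫ x₁, ∫ x₂, mh x₁ x₂ μ ∂P ∂P)) := by
    rw [hiter P inferInstance]
    exact Tendsto.congr (fun n => (hiter (Pn n) inferInstance).symm) hA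
  unfold msDepth
  exact tendsto_const_nhds.sub (hmain.const_mul _)
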